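/- Let n be a natural number, k ∈ Fin n, and let x, y : Fin n → Bool satisfy y j = x j for all j ≠ k. Assume that the new opinion of agent k is a (weak) majority opinion among the other agents, i.e., card{j ≠ k : x j = y k} ≥ card{j ≠ k : x j ≠ y k}. Then Σ_{i,j ∈ Fin n} 1{y i ≠ y j} ≤ Σ_{i,j ∈ Fin n} 1{x i ≠ x j}. -/

import Mathlib

open Finset

/-- If only agent `k` may change its opinion between the profiles `x` and `y`, and the new
opinion `y k` is a weak majority among the other agents, then the total pairwise
disagreement does not increase. -/
theorem stmt_7 (n : ℕ) (k : Fin n) (x y : Fin n → Bool)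
    (h : ∀ j : Fin n, j ≠ k → y j = x j)
    (hmaj : ((Finset.univ.erase k).filter (fun j => x j ≠ y k)).card
      ≤ ((Finset.univ.erase k).filter (fun j => x j = y k)).card) :
    (∑ i : Fin n, ∑ j : Fin n, if y i ≠ y j then (1 : ℤ) else 0)
      ≤ ∑ i : Fin n, ∑ j : Fin n, if x i ≠ x j then (1 : ℤ) else 0 := by
  classical
  set A := Finset.univ.erase k with hA
  have hknA : k ∉ A := Finset.notMem_erase k _
  have hins : insert k A = (Finset.univ : Finset (Fin n)) :=
    Finset.insert_erase (Finset.mem_univ k)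
  have hsplit : ∀ z : Fin n → Bool,
      (∑ i : Fin n, ∑ j : Fin n, if z i ≠ z j then (1:ℤ) else 0)
      = (∑ i ∈ A, ∑ j ∈ A, if z i ≠ z j then (1:ℤ) else 0)
        + (∑ j ∈ A, if z k ≠ z j then (1:ℤ) else 0)
        + (∑ i ∈ A, if z i ≠ z k then (1:ℤ) else 0) := by
    intro z
    have h1 : (∑ i : Fin n, ∑ j : Fin n, if z i ≠ z j then (1:ℤ) else 0)
        = ∑ i ∈ insert k A, ∑ j ∈ insert k A, if z i ≠ z j then (1:ℤ) else 0 := by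
      rw [hins]
    rw [h1, Finset.sum_insert hknA]
    rw [Finset.sum_insert hknA]
    have h2 : ∀ i ∈ A, (∑ j ∈ insert k A, if z i ≠ z j then (1:ℤ) else 0)
        = (if z i ≠ z k then (1:ℤ) else 0) + ∑ j ∈ A, if z i ≠ z j then (1:ℤ) else 0 := by
      intro i _
      rw [Finset.sum_insert hknA]
    rw [Finset.sum_congr rfl h2, Finset.sum_add_distrib]
    simp only [ne_eq, not_true_eq_false, if_neg (fun hc : ¬ z k = z k => hc rfl)]
    simp
    ring
  rw [hsplit x, hsplit y]
  have hAA : (∑ i ∈ A, ∑ j ∈ A, if y i ≠ y j then (1:ℤ) else 0)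
      = (∑ i ∈ A, ∑ j ∈ A, if x i ≠ x j then (1:ℤ) else 0) := by
    apply Finset.sum_congr rfl
    intro i hi
    apply Finset.sum_congr rfl
    intro j hj
    rw [h i (Finset.ne_of_mem_erase hi), h j (Finset.ne_of_mem_erase hj)]
  have key : (∑ j ∈ A, if y j ≠ y k then (1:ℤ) else 0)
      ≤ (∑ j ∈ A, if x j ≠ x k then (1:ℤ) else 0) := by
    have hy : (∑ j ∈ A, if y j ≠ y k then (1:ℤ) else 0)
        = ((A.filter (fun j => x j ≠ y k)).card : ℤ) := by
      rw [Finset.card_filter]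
      push_cast
      apply Finset.sum_congr rfl
      intro j hj
      rw [h j (Finset.ne_of_mem_erase hj)]
    have hx : (∑ j ∈ A, if x j ≠ x k then (1:ℤ) else 0)
        = ((A.filter (fun j => x j ≠ x k)).card : ℤ) := by
      rw [Finset.card_filter]
      push_cast
      rfl
    rw [hy, hx]
    by_cases hc : x k = y k
    · have : (fun j => x j ≠ y k) = (fun j => x j ≠ x k) := by
        funext j; rw [hc]
      simp only [hc]
      exact le_rfl
    · have heq : A.filter (fun j => x j = y k) = A.filter (fun j => x j ≠ x k) := by
        apply Finset.filter_congr
        intro j _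
        constructor
        · intro hj hj2; exact hc (hj2.symm.trans hj)
        · intro hj
          rcases Bool.eq_false_or_eq_true (x j) with h1 | h1 <;>
          rcases Bool.eq_false_or_eq_true (y k) with h2 | h2 <;>
          rcases Bool.eq_false_or_eq_true (x k) with h3 | h3 <;>
            simp [h1, h2, h3] at hc hj ⊢
      exact_mod_cast (le_trans hmaj (le_of_eq (congrArg Finset.card heq)))
  have key2 : (∑ j ∈ A, if y k ≠ y j then (1:ℤ) else 0)
      ≤ (∑ j ∈ A, if x k ≠ x j then (1:ℤ) else 0) := by
    have e1 : (∑ j ∈ A, if y k ≠ y j then (1:ℤ) else 0)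
        = (∑ j ∈ A, if y j ≠ y k then (1:ℤ) else 0) := by
      apply Finset.sum_congr rfl; intro j _; simp [ne_comm]
    have e2 : (∑ j ∈ A, if x k ≠ x j then (1:ℤ) else 0)
        = (∑ j ∈ A, if x j ≠ x k then (1:ℤ) else 0) := by
      apply Finset.sum_congr rfl; intro j _; simp [ne_comm]
    rw [e1, e2]; exact key
  rw [hAA]
  linarith
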